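/- Let A, R > 0 and for each parameter u with |u| > R let θ_u : ℂ → ℂ satisfy |θ_u(w)| ≤ A/|w|² for |w| > R. Fix u ∈ ℂ with Re(u) > R' where R' > R + A/R, fix n ∈ ℕ, and define the orbit u_{n,0} = u + n and u_{n,i+1} = u_{n,i} - 1 + θ_{u+n+i+1}(u_{n,i}). Then for all 0 ≤ i ≤ n, Re(u_{n,i}) > R + n - i. -/

import Mathlib

/-- invariance lemma for the non-autonomous orbit
`v 0 = u + n`, `v (i+1) = v i - 1 + θ_{u+n+i+1} (v i)`: if `|θ_u w| ≤ A/|w|²`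
for `|u|, |w| > R`, `R' > R + A/R` and `Re u > R'`, then `Re (v i) > R + n - i`
for all `0 ≤ i ≤ n`. -/
theorem stmt2 (A R R' : ℝ) (hA : 0 < A) (hR : 0 < R) (hR' : R + A/R < R')
    (θ : ℂ → ℂ → ℂ)
    (hθ : ∀ u w : ℂ, R < ‖u‖ → R < ‖w‖ →
      ‖θ u w‖ ≤ A / ‖w‖ ^ 2)
    (u : ℂ) (hu : R' < u.re) (n : ℕ)
    (v : ℕ → ℂ) (hv0 : v 0 = u + n)
    (hvs : ∀ i : ℕ, v (i+1) = v i - 1 + θ (u + n + i + 1) (v i)) :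
    ∀ i ≤ n, R + n - i < (v i).re := by
  have hRA : R + A/R < u.re := lt_trans hR' hu
  -- main induction with telescoping error bound
  have key : ∀ i, i ≤ n →
      u.re + n - i - A*(1/(R+(n:ℝ)-i) - 1/(R+(n:ℝ))) ≤ (v i).re := by
    intro i
    induction i with
    | zero =>
      intro _
      have : (v 0).re = u.re + n := by
        rw [hv0]; simp
      rw [this]
      simp
    | succ i ih =>
      intro hin
      have hi : i ≤ n := Nat.le_of_succ_le hin
      have hni : (0:ℝ) ≤ (n:ℝ) - i := by
        have := (Nat.cast_le (α := ℝ)).mpr hi; linarith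
      have hni1 : (0:ℝ) ≤ (n:ℝ) - i - 1 := by
        have := (Nat.cast_le (α := ℝ)).mpr hin; push_cast at this; linarith
      have hlow := ih hi
      set a : ℝ := R + (n:ℝ) - i with ha
      have hapos : 0 < a := by simp only [ha]; linarith
      have ha1pos : 0 < a - 1 := by simp only [ha]; linarith
      have hRa : R ≤ a - 1 := by simp only [ha]; linarith
      -- error bound so far ≤ A/R
      have herr : A*(1/a - 1/(R+(n:ℝ))) ≤ A/R := by
        have h1 : 1/a ≤ 1/R := by
          apply one_div_le_one_div_of_le hR; linarith
        have h2 : 0 < 1/(R+(n:ℝ)) := by positivity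
        have : 1/a - 1/(R+(n:ℝ)) ≤ 1/R := by linarith
        calc A*(1/a - 1/(R+(n:ℝ))) ≤ A * (1/R) := by
              exact mul_le_mul_of_nonneg_left this hA.le
          _ = A/R := by ring
      -- lower bound on re of v i
      have hgt : a < (v i).re := by
        have : u.re + n - i - A*(1/a - 1/(R+(n:ℝ))) ≤ (v i).re := hlow
        have hu' : R + A/R < u.re := hRA
        simp only [ha]; linarith
      have hre_abs : (v i).re ≤ ‖v i‖ := Complex.re_le_norm _
      have habs : a < ‖v i‖ := lt_of_lt_of_le hgt hre_abs
      have hRv : R < ‖v i‖ := by linarith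
      have hRu : R < ‖u + (n:ℂ) + (i:ℂ) + 1‖ := by
        have hre : (u + (n:ℂ) + (i:ℂ) + 1).re = u.re + n + i + 1 := by simp
        have : R < (u + (n:ℂ) + (i:ℂ) + 1).re := by
          rw [hre]
          have hi0 : (0:ℝ) ≤ (i:ℝ) := Nat.cast_nonneg i
          have hn0 : (0:ℝ) ≤ (n:ℝ) := Nat.cast_nonneg n
          have hAR : 0 < A/R := by positivity
          linarith
        exact lt_of_lt_of_le this (Complex.re_le_norm _)
      have hθb := hθ (u + (n:ℂ) + (i:ℂ) + 1) (v i) hRu hRv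
      have hθb2 : ‖θ (u + (n:ℂ) + (i:ℂ) + 1) (v i)‖ ≤ A / a ^ 2 := by
        refine le_trans hθb ?_
        apply div_le_div_of_nonneg_left hA.le (by positivity)
        have h1 : 0 ≤ a := hapos.le
        nlinarith [habs]
      have hθre : -(A / a ^ 2) ≤ (θ (u + (n:ℂ) + (i:ℂ) + 1) (v i)).re := by
        have h1 : |(θ (u + (n:ℂ) + (i:ℂ) + 1) (v i)).re| ≤
            ‖θ (u + (n:ℂ) + (i:ℂ) + 1) (v i)‖ := Complex.abs_re_le_norm _
        have := neg_abs_le (θ (u + (n:ℂ) + (i:ℂ) + 1) (v i)).re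
        linarith
      have hstep : (v (i+1)).re = (v i).re - 1 + (θ (u + (n:ℂ) + (i:ℂ) + 1) (v i)).re := by
        rw [hvs i]; simp
      -- telescoping: A/a² ≤ A*(1/(a-1) - 1/a)
      have htel : A / a ^ 2 ≤ A*(1/(a-1) - 1/a) := by
        have heq : 1/(a-1) - 1/a = 1/((a-1)*a) := by field_simp; ring
        rw [heq, mul_one_div]
        apply div_le_div_of_nonneg_left hA.le (by positivity)
        nlinarith
      have hgoal : u.re + n - (i+1) - A*(1/(a-1) - 1/(R+(n:ℝ))) ≤ (v (i+1)).re := by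
        rw [hstep]
        have : u.re + n - i - A*(1/a - 1/(R+(n:ℝ))) ≤ (v i).re := hlow
        linarith
      have hcast : R + (n:ℝ) - ((i:ℕ)+1 : ℕ) = a - 1 := by
        simp only [ha]; push_cast; ring
      have hcast2 : ((i:ℕ)+1 : ℕ) = ((i:ℝ)+1) := by push_cast; ring
      rw [hcast, hcast2]
      convert hgoal using 2
  intro i hi
  have hlow := key i hi
  have hni : (0:ℝ) ≤ (n:ℝ) - i := by
    have := (Nat.cast_le (α := ℝ)).mpr hi; linarith
  have herr : A*(1/(R+(n:ℝ)-i) - 1/(R+(n:ℝ))) ≤ A/R := by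
    have h1 : 1/(R+(n:ℝ)-i) ≤ 1/R := by
      apply one_div_le_one_div_of_le hR; linarith
    have h2 : 0 < 1/(R+(n:ℝ)) := by positivity
    have : 1/(R+(n:ℝ)-i) - 1/(R+(n:ℝ)) ≤ 1/R := by linarith
    calc A*(1/(R+(n:ℝ)-i) - 1/(R+(n:ℝ))) ≤ A * (1/R) :=
          mul_le_mul_of_nonneg_left this hA.le
      _ = A/R := by ring
  linarith
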